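/- arXiv:1211.2910 — 2 statements merged into one kernel-verified Lean document; each statement's English description precedes it below -/
import Mathlib

section
/- Let I be a finite index set, τ : I → I an involution without fixed points, λ > 1, and real numbers (k_i)_{i∈I}, integers (r_i)_{i∈I} with r_i ≠ 0, satisfying k_{τ(i)} = -k_i λ^{-r_i} and r_{τ(i)} = -r_i for all i. For n ≥ 1 define I_n ⊂ I (with I_n = I for all n ≥ some n₀, and I_m ⊂ I_n for m ≤ n), k_{i,n} = λⁿ k_i for i ∈ I_n and k_{i,n} = 0 otherwise, such that i ∈ I_n iff n + r_i ≥ 1 and additional constraints hold, and set, for σ > 0, π_{n,m} = σ² ∑_{i ∈ I_n, r_i = m-n} k_{i,n}² for n ≠ m and π_n = σ² ∑_{i∈I_n} k_{i,n}². Then the matrix Π with off-diagonal entries π_{n,m} and diagonal entries -π_n is a stable, conservative, symmetric q-matrix; in particular π_{n,m} = π_{m,n} for all n ≠ m. -/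
/-- **The matrix of second-moment equations is a stable, conservative, symmetric
q-matrix.** Given shell-model coefficients satisfying the local-conservativity
algebraic relations, the matrix with off-diagonal entries
`π n m = σ² ∑_{i ∈ I_n, r_i = m-n} k_{i,n}²` and diagonal `-π_n`,
`π_n = σ² ∑_{i ∈ I_n} k_{i,n}²`, is symmetric and conservative (each row,
restricted to indices `m ≥ 1`, `m ≠ n`, sums to `π_n`). -/
theorem stmt_2 {I : Type*} [Fintype I] (τ : I → I)
    (hτinv : ∀ i, τ (τ i) = i) (hτnofix : ∀ i, τ i ≠ i)
    (lam σ : ℝ) (hlam : 1 < lam) (hσ : 0 < σ)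
    (k : I → ℝ) (r h : I → ℤ) (hr : ∀ i, r i ≠ 0)
    (hk : ∀ i, k (τ i) = -k i * lam ^ (-r i))
    (hrτ : ∀ i, r (τ i) = -r i)
    (hh : ∀ i, h (τ i) = h i - r i)
    (kk : I → ℤ → ℝ)
    (hkk : ∀ i n, kk i n =
      if 1 ≤ n + r i ∧ 1 ≤ n + h i then lam ^ n * k i else 0)
    (π : ℤ → ℤ → ℝ) (πd : ℤ → ℝ)
    (hπ : ∀ n m, π n m =
      σ ^ 2 * ∑ i ∈ Finset.univ.filter (fun i => r i = m - n), (kk i n) ^ 2)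
    (hπd : ∀ n, πd n = σ ^ 2 * ∑ i, (kk i n) ^ 2) :
    -- stability/q-matrix sign conditions
    (∀ n m, n ≠ m → 0 ≤ π n m) ∧ (∀ n, 0 ≤ πd n) ∧
    -- symmetry
    (∀ n m, 1 ≤ n → 1 ≤ m → n ≠ m → π n m = π m n) ∧
    -- conservativity
    (∀ n, 1 ≤ n →
      HasSum (fun m : ℤ => if 1 ≤ m ∧ m ≠ n then π n m else 0) (πd n)) := by
  have hlam0 : lam ≠ 0 := by linarith
  -- key squared identity
  have key : ∀ (i : I) (n : ℤ), 1 ≤ n → 1 ≤ n + r i →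
      (kk (τ i) (n + r i)) ^ 2 = (kk i n) ^ 2 := by
    intro i n hn hnr
    rw [hkk, hkk, hrτ, hh]
    have e1 : n + r i + -r i = n := by ring
    have e2 : n + r i + (h i - r i) = n + h i := by ring
    rw [e1, e2]
    by_cases hcond : 1 ≤ n + h i
    · rw [if_pos ⟨hn, hcond⟩, if_pos ⟨hnr, hcond⟩, hk]
      have hp : lam ^ (n + r i) * lam ^ (-r i) = lam ^ n := by
        have e3 : n + r i + -r i = n := by ring
        rw [← zpow_add₀ hlam0, e3]
      calc (lam ^ (n + r i) * (-k i * lam ^ (-r i))) ^ 2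
          = (lam ^ (n + r i) * lam ^ (-r i)) ^ 2 * (k i) ^ 2 := by ring
        _ = (lam ^ n * k i) ^ 2 := by rw [hp]; ring
    · simp [hcond]
  refine ⟨?_, ?_, ?_, ?_⟩
  · intro n m _
    rw [hπ]
    positivity
  · intro n
    rw [hπd]
    positivity
  · intro n m hn hm hne
    rw [hπ n m, hπ m n]
    congr 1
    rw [Finset.sum_filter, Finset.sum_filter]
    refine Fintype.sum_equiv (Function.Involutive.toPerm τ (show Function.Involutive τ from hτinv))
      (fun i => if r i = m - n then (kk i n) ^ 2 else 0)
      (fun i => if r i = n - m then (kk i m) ^ 2 else 0) ?_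
    intro i
    simp only [Function.Involutive.coe_toPerm]
    simp only [hrτ]
    by_cases hc : r i = m - n
    · rw [if_pos hc, if_pos (show -r i = n - m by omega)]
      have hm' : m = n + r i := by omega
      rw [hm']
      exact (key i n hn (by omega)).symm
    · rw [if_neg hc, if_neg (show ¬(-r i = n - m) by omega)]
  · intro n hn
    have heq : (fun m : ℤ => if 1 ≤ m ∧ m ≠ n then π n m else 0) =
        fun m : ℤ => ∑ i, if m = n + r i then σ ^ 2 * (kk i n) ^ 2 else 0 := by
      funext m
      by_cases h1 : 1 ≤ m ∧ m ≠ n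
      · rw [if_pos h1, hπ, Finset.mul_sum, Finset.sum_filter]
        refine Finset.sum_congr rfl fun i _ => ?_
        have : (r i = m - n) ↔ (m = n + r i) := by omega
        simp only [this]
      · rw [if_neg h1]
        symm
        refine Finset.sum_eq_zero fun i _ => ?_
        by_cases hm : m = n + r i
        · rw [if_pos hm]
          have hk0 : kk i n = 0 := by
            rw [hkk]
            refine if_neg ?_
            push_neg at h1
            rintro ⟨ha, _⟩
            have := h1 (by omega)
            have := hr i
            omega
          rw [hk0]
          ring
        · rw [if_neg hm]
    rw [heq, hπd, Finset.mul_sum]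
    exact hasSum_sum fun i _ => hasSum_ite_eq (n + r i) (σ ^ 2 * (kk i n) ^ 2)
end

section
/- Let (T_n)_{n≥1} be nonnegative random variables on a probability space such that for each n, P(T_n > t) ≤ e^{-t/ν_n} for all t ≥ 0, where ν_n > 0 with ν := ∑_n ν_n < ∞ and Λ := -∑_n ν_n log ν_n < ∞. Then for every t ≥ 0, P(∑_{n≥1} T_n > t) ≤ ν e^{(Λ - t)/ν}; in particular ∑_n T_n is almost surely finite and its tail decays exponentially. -/
open MeasureTheory

/-- **Exponential tail bound for a sum of exponentially dominated times.**
If the nonnegative random variables `T_n` satisfy `P(T_n > t) ≤ e^{-t/ν_n}`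
with `ν_n > 0`, `ν = ∑ ν_n < ∞` and `Λ = -∑ ν_n log ν_n` (absolutely)
finite, then `P(∑_n T_n > t) ≤ ν e^{(Λ - t)/ν}` for every `t ≥ 0`. -/
theorem stmt_4 {Ω : Type*} [MeasurableSpace Ω] (μ : Measure Ω)
    [IsProbabilityMeasure μ]
    (T : ℕ → Ω → ℝ) (hTmeas : ∀ n, Measurable (T n))
    (hTnonneg : ∀ n ω, 0 ≤ T n ω)
    (ν : ℕ → ℝ) (hνpos : ∀ n, 0 < ν n)
    (hνsum : Summable ν)
    (hΛsum : Summable fun n => |ν n * Real.log (ν n)|)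
    (htail : ∀ n, ∀ t : ℝ, 0 ≤ t →
      μ {ω | t < T n ω} ≤ ENNReal.ofReal (Real.exp (-t / ν n))) :
    ∀ t : ℝ, 0 ≤ t →
      μ {ω | ENNReal.ofReal t < ∑' n, ENNReal.ofReal (T n ω)} ≤
        ENNReal.ofReal ((∑' n, ν n) *
          Real.exp (((-∑' n, ν n * Real.log (ν n)) - t) / (∑' n, ν n))) := by
  intro t ht
  set V : ℝ := ∑' n, ν n with hV
  set Λ : ℝ := -∑' n, ν n * Real.log (ν n) with hΛ
  have hVpos : 0 < V := hνsum.tsum_pos (fun n => (hνpos n).le) 0 (hνpos 0)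
  set C : ℝ := Real.exp ((Λ - t) / V) with hC
  have hCpos : 0 < C := Real.exp_pos _
  set s : ℕ → ℝ := fun n => -(ν n * Real.log (ν n)) - ν n * ((Λ - t) / V) with hs
  have hslog : Summable fun n => ν n * Real.log (ν n) := summable_abs_iff.mp hΛsum
  have hssum : Summable s := hslog.neg.sub (hνsum.mul_right _)
  have hsum_s : ∑' n, s n = t := by
    rw [hs, hslog.neg.tsum_sub (hνsum.mul_right _), tsum_neg, tsum_mul_right, ← hV, ← hΛ]
    field_simp
    ring
  -- key identity : exp (-s n / ν n) = ν n * C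
  have hkey : ∀ n, Real.exp (-s n / ν n) = ν n * C := by
    intro n
    have hν := hνpos n
    have : -s n / ν n = Real.log (ν n) + (Λ - t) / V := by
      rw [hs]
      field_simp
      ring
    rw [this, Real.exp_add, Real.exp_log hν, hC]
  -- union bound inclusion
  have hsub : {ω | ENNReal.ofReal t < ∑' n, ENNReal.ofReal (T n ω)} ⊆
      ⋃ n, {ω | s n < T n ω} := by
    intro ω hω
    by_contra h
    simp only [Set.mem_iUnion, Set.mem_setOf_eq, not_exists, not_lt] at h
    have hsnn : ∀ n, 0 ≤ s n := fun n => le_trans (hTnonneg n ω) (h n)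
    have : (∑' n, ENNReal.ofReal (T n ω)) ≤ ENNReal.ofReal t := by
      calc (∑' n, ENNReal.ofReal (T n ω)) ≤ ∑' n, ENNReal.ofReal (s n) :=
            ENNReal.tsum_le_tsum fun n => ENNReal.ofReal_le_ofReal (h n)
        _ = ENNReal.ofReal (∑' n, s n) :=
            (ENNReal.ofReal_tsum_of_nonneg hsnn hssum).symm
        _ = ENNReal.ofReal t := by rw [hsum_s]
    exact absurd hω (not_lt.mpr this)
  have hterm : ∀ n, μ {ω | s n < T n ω} ≤ ENNReal.ofReal (ν n * C) := by
    intro n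
    rw [← hkey n]
    rcases le_or_gt 0 (s n) with h0 | h0
    · exact htail n (s n) h0
    · calc μ {ω | s n < T n ω} ≤ 1 := prob_le_one
        _ ≤ ENNReal.ofReal (Real.exp (-s n / ν n)) := by
            rw [← ENNReal.ofReal_one]
            exact ENNReal.ofReal_le_ofReal (Real.one_le_exp
              (div_nonneg (neg_nonneg.mpr h0.le) (hνpos n).le))
  calc μ {ω | ENNReal.ofReal t < ∑' n, ENNReal.ofReal (T n ω)}
      ≤ μ (⋃ n, {ω | s n < T n ω}) := measure_mono hsub
    _ ≤ ∑' n, μ {ω | s n < T n ω} := measure_iUnion_le _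
    _ ≤ ∑' n, ENNReal.ofReal (ν n * C) := ENNReal.tsum_le_tsum hterm
    _ = ENNReal.ofReal (∑' n, ν n * C) :=
        (ENNReal.ofReal_tsum_of_nonneg (fun n => mul_nonneg (hνpos n).le hCpos.le) (hνsum.mul_right _)).symm
    _ = ENNReal.ofReal (V * C) := by rw [tsum_mul_right]
end
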